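/- Let n ≥ 2, f ≥ 1, D ⊆ {1,…,n−1}, and let λ ∈ ℤ^n satisfy (H_f). The following are equivalent: (a) there exists a D-admissible w ∈ S_n with w·λ'_D dominant and supp(fθ − w·λ'_D) ⊆ w(D); (b) there exists a D-admissible σ ∈ S_n with λ'_D = (f·(σ⁻¹·θ))'_D, i.e. the W_D-average of λ equals the W_D-average of f·σ⁻¹·θ. Moreover, if (a) holds for w, then (b) holds with σ = w. (Paper: Proposition 'minimal' in §2.2, for G = GL_n: the isotypic components C_P with P(C_P) = {}^w P are exactly those attached to f·w⁻¹(θ_G) restricted to Z_{M_P}.) -/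

import Mathlib

/-!
Setup (§2.2 of the paper, for `G = GL_n`): the symmetric group `S_n` acts on `ℚ^n` by
permuting coordinates, `(w • v) k = v (w⁻¹ k)`.  Coordinates are indexed by `Fin n`
(`0`-based), so the simple roots are `α i = e i − e (i+1)` for `i ∈ {0, …, n−2}`
(the paper's `α_{i+1}`), subsets of simple roots are subsets of
`{0, …, n−2} = Finset.range (n−1)`, and `θ = (n−1, n−2, …, 1, 0)`.
-/

namespace BHHMS

/-- The standard basis vector `e i` of `ℚ^n`. -/
def stde (n i : ℕ) : Fin n → ℚ := fun k => if (k : ℕ) = i then 1 else 0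

/-- The simple root `α i = e i − e (i+1)`, for `i ∈ {0, …, n−2}`. -/
def simpleRoot (n i : ℕ) : Fin n → ℚ := stde n i - stde n (i + 1)

/-- The action of `S_n` on `ℚ^n` permuting the coordinates: `(w • v) k = v (w⁻¹ k)`. -/
def permAct (n : ℕ) (w : Equiv.Perm (Fin n)) (v : Fin n → ℚ) : Fin n → ℚ :=
  fun k => v (w⁻¹ k)

/-- `v ≤ v'` iff `v' − v` is a `ℚ≥0`-linear combination of the simple roots. -/
def rootLE (n : ℕ) (v v' : Fin n → ℚ) : Prop :=
  ∃ c : ℕ → ℚ, (∀ i, 0 ≤ c i) ∧ v' - v = ∑ i ∈ Finset.range (n - 1), c i • simpleRoot n i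

/-- `v` is dominant iff `v 0 ≥ v 1 ≥ … ≥ v (n−1)`. -/
def Dominant (n : ℕ) (v : Fin n → ℚ) : Prop := ∀ i j : Fin n, i ≤ j → v j ≤ v i

/-- The adjacent transposition `s i = (i, i+1)` (junk value `1` if `i + 1 ≥ n`). -/
def adjSwap (n i : ℕ) : Equiv.Perm (Fin n) :=
  if h : i + 1 < n then Equiv.swap ⟨i, Nat.lt_of_succ_lt h⟩ ⟨i + 1, h⟩ else 1

/-- The subgroup `W_D ⊆ S_n` generated by the `s i` for `i ∈ D`. -/
def WD (n : ℕ) (D : Finset ℕ) : Subgroup (Equiv.Perm (Fin n)) :=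
  Subgroup.closure (adjSwap n '' ↑D)

/-- `Σ_{w ∈ W_D} w·v`. -/
noncomputable def WDsum (n : ℕ) (D : Finset ℕ) (v : Fin n → ℚ) : Fin n → ℚ :=
  ∑ᶠ w ∈ WD n D, permAct n w v

/-- The `W_D`-average `λ'_D = |W_D|⁻¹ Σ_{w ∈ W_D} w·λ`. -/
noncomputable def avg (n : ℕ) (D : Finset ℕ) (v : Fin n → ℚ) : Fin n → ℚ :=
  ((Nat.card ↥(WD n D) : ℚ))⁻¹ • WDsum n D v

/-- For `v` of coordinate sum `0`, writing `v = Σ_i c_i • α_i` one has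
`c_i = v 0 + ⋯ + v i`; then `supp v = {i : c_i ≠ 0}`. -/
def suppOf (n : ℕ) (v : Fin n → ℚ) : Finset ℕ :=
  (Finset.range (n - 1)).filter fun i => (∑ k : Fin n, if (k : ℕ) ≤ i then v k else 0) ≠ 0

/-- `w` is `D`-admissible iff `w (i+1) = w i + 1` for every `i ∈ D`. -/
def IsAdmissible (n : ℕ) (D : Finset ℕ) (w : Equiv.Perm (Fin n)) : Prop :=
  ∀ i ∈ D, ∀ h : i + 1 < n,
    ((w ⟨i + 1, h⟩ : Fin n) : ℕ) = ((w ⟨i, Nat.lt_of_succ_lt h⟩ : Fin n) : ℕ) + 1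

/-- The image `w(D) = {w i : i ∈ D}` as a subset of `ℕ`. -/
def permImage (n : ℕ) (w : Equiv.Perm (Fin n)) (D : Finset ℕ) : Finset ℕ :=
  D.image fun i => if h : i < n then ((w ⟨i, h⟩ : Fin n) : ℕ) else i

/-- `θ = (n−1, n−2, …, 1, 0)`. -/
def theta (n : ℕ) : Fin n → ℚ := fun k => (n : ℚ) - 1 - ((k : ℕ) : ℚ)

/-- A vector of `ℤ^n` seen in `ℚ^n`. -/
def ratVec (n : ℕ) (lam : Fin n → ℤ) : Fin n → ℚ := fun k => ((lam k : ℤ) : ℚ)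

/-- `λ ∈ ℤ^n` satisfies `(H_f)` iff `σ·λ ≤ fθ` for every `σ ∈ S_n`. -/
def SatisfiesHf (n f : ℕ) (lam : Fin n → ℤ) : Prop :=
  ∀ σ : Equiv.Perm (Fin n), rootLE n (permAct n σ (ratVec n lam)) ((f : ℚ) • theta n)

noncomputable instance (n : ℕ) (D : Finset ℕ) : Fintype ↥(WD n D) := Fintype.ofFinite _

variable {n : ℕ}

lemma permAct_mul (u w : Equiv.Perm (Fin n)) (v : Fin n → ℚ) :
    permAct n (u * w) v = permAct n u (permAct n w v) := by
  funext k; simp [permAct, mul_inv_rev]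

lemma permAct_one (v : Fin n → ℚ) : permAct n 1 v = v := rfl

lemma permAct_smul (w : Equiv.Perm (Fin n)) (c : ℚ) (v : Fin n → ℚ) :
    permAct n w (c • v) = c • permAct n w v := rfl

lemma permAct_sub (w : Equiv.Perm (Fin n)) (v v' : Fin n → ℚ) :
    permAct n w (v - v') = permAct n w v - permAct n w v' := rfl

lemma permAct_neg (w : Equiv.Perm (Fin n)) (v : Fin n → ℚ) :
    permAct n w (-v) = -permAct n w v := rfl

lemma permAct_sum {ι : Type*} (s : Finset ι) (w : Equiv.Perm (Fin n)) (f : ι → Fin n → ℚ) :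
    permAct n w (∑ i ∈ s, f i) = ∑ i ∈ s, permAct n w (f i) := by
  funext k; simp [permAct]

lemma sum_permAct (w : Equiv.Perm (Fin n)) (v : Fin n → ℚ) :
    ∑ k, permAct n w v k = ∑ k, v k := Equiv.sum_comp w⁻¹ v

lemma adjSwap_mem {D : Finset ℕ} {i : ℕ} (hi : i ∈ D) : adjSwap n i ∈ WD n D :=
  Subgroup.subset_closure ⟨i, hi, rfl⟩

lemma WDsum_eq_sum (D : Finset ℕ) (v : Fin n → ℚ) :
    WDsum n D v = ∑ w : ↥(WD n D), permAct n (↑w) v := by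
  have hfin : ((WD n D : Subgroup (Equiv.Perm (Fin n))) : Set (Equiv.Perm (Fin n))).Finite :=
    Set.toFinite _
  rw [WDsum]
  rw [show (∑ᶠ w ∈ WD n D, permAct n w v)
      = ∑ᶠ w ∈ ((WD n D : Subgroup _) : Set (Equiv.Perm (Fin n))), permAct n w v from rfl]
  rw [finsum_mem_eq_finite_toFinset_sum _ hfin,
    Finset.sum_subtype (p := fun x => x ∈ WD n D) _ (fun x => by simp [Set.Finite.mem_toFinset]) (fun w => permAct n w v)]


lemma sum_reindex_right (D : Finset ℕ) (F : Equiv.Perm (Fin n) → Fin n → ℚ)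
    {u : Equiv.Perm (Fin n)} (hu : u ∈ WD n D) :
    ∑ w : ↥(WD n D), F (↑w * u) = ∑ w : ↥(WD n D), F ↑w := by
  exact Equiv.sum_comp (Equiv.mulRight (⟨u, hu⟩ : ↥(WD n D))) (fun w => F ↑w)

lemma permAct_WDsum (D : Finset ℕ) {u : Equiv.Perm (Fin n)} (hu : u ∈ WD n D)
    (v : Fin n → ℚ) : permAct n u (WDsum n D v) = WDsum n D v := by
  rw [WDsum_eq_sum, permAct_sum]
  have h1 : ∀ w : ↥(WD n D), permAct n u (permAct n ↑w v) = permAct n (u * ↑w) v :=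
    fun w => (permAct_mul u ↑w v).symm
  simp only [h1]
  exact Equiv.sum_comp (Equiv.mulLeft (⟨u, hu⟩ : ↥(WD n D))) (fun w => permAct n ↑w v)

lemma permAct_avg (D : Finset ℕ) {u : Equiv.Perm (Fin n)} (hu : u ∈ WD n D)
    (v : Fin n → ℚ) : permAct n u (avg n D v) = avg n D v := by
  rw [avg, permAct_smul, permAct_WDsum D hu]

lemma WDsum_sub (D : Finset ℕ) (v v' : Fin n → ℚ) :
    WDsum n D (v - v') = WDsum n D v - WDsum n D v' := by
  simp [WDsum_eq_sum, permAct_sub, Finset.sum_sub_distrib]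

lemma WDsum_smul (D : Finset ℕ) (c : ℚ) (v : Fin n → ℚ) :
    WDsum n D (c • v) = c • WDsum n D v := by
  simp [WDsum_eq_sum, permAct_smul, Finset.smul_sum]

lemma avg_sub (D : Finset ℕ) (v v' : Fin n → ℚ) :
    avg n D (v - v') = avg n D v - avg n D v' := by
  simp [avg, WDsum_sub, smul_sub]

lemma card_WD_pos (D : Finset ℕ) : 0 < (Nat.card ↥(WD n D) : ℚ) := by
  have : 0 < Nat.card ↥(WD n D) := Nat.card_pos
  exact_mod_cast this

lemma avg_of_invariant (D : Finset ℕ) {v : Fin n → ℚ}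
    (hv : ∀ u : Equiv.Perm (Fin n), u ∈ WD n D → permAct n u v = v) :
    avg n D v = v := by
  have : WDsum n D v = (Nat.card ↥(WD n D) : ℚ) • v := by
    rw [WDsum_eq_sum]
    have h1 : ∀ w : ↥(WD n D), permAct n (↑w) v = v := fun w => hv _ w.prop
    simp only [h1, Finset.sum_const, Finset.card_univ, Nat.card_eq_fintype_card, ← Nat.cast_smul_eq_nsmul ℚ]
  rw [avg, this, smul_smul, inv_mul_cancel₀ (card_WD_pos D).ne', one_smul]

lemma permAct_adjSwap_simpleRoot {i : ℕ} (h : i + 1 < n) :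
    permAct n (adjSwap n i) (simpleRoot n i) = -simpleRoot n i := by
  funext k
  simp only [permAct, adjSwap, dif_pos h, Equiv.swap_inv, simpleRoot, stde,
    Pi.sub_apply, Pi.neg_apply, Equiv.swap_apply_def]
  rcases eq_or_ne k ⟨i, Nat.lt_of_succ_lt h⟩ with hk | hk
  · subst hk; simp
  · rcases eq_or_ne k ⟨i + 1, h⟩ with hk2 | hk2
    · subst hk2; simp [Fin.ext_iff]
    · rw [if_neg hk, if_neg hk2]
      have h1 : (k : ℕ) ≠ i := fun hh => hk (Fin.ext hh)
      have h2 : (k : ℕ) ≠ i + 1 := fun hh => hk2 (Fin.ext hh)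
      simp [h1, h2]

lemma WDsum_simpleRoot (D : Finset ℕ) {i : ℕ} (hi : i ∈ D) (h : i + 1 < n) :
    WDsum n D (simpleRoot n i) = 0 := by
  have key : WDsum n D (simpleRoot n i) = -WDsum n D (simpleRoot n i) := by
    conv_lhs => rw [WDsum_eq_sum,
      ← sum_reindex_right D (fun w => permAct n w (simpleRoot n i)) (adjSwap_mem hi)]
    rw [WDsum_eq_sum]
    rw [← Finset.sum_neg_distrib]
    refine Finset.sum_congr rfl (fun w _ => ?_)
    rw [permAct_mul, permAct_adjSwap_simpleRoot h, permAct_neg]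
  funext k
  have := congrFun key k
  simp only [Pi.neg_apply, Pi.zero_apply] at this ⊢
  linarith
  

/-- Elements of `W_D` preserve initial segments `{k : k ≤ m}` for `m ∉ D`. -/
lemma WD_le_iff (D : Finset ℕ) {m : ℕ} (hm : m ∉ D) {u : Equiv.Perm (Fin n)}
    (hu : u ∈ WD n D) : ∀ k : Fin n, ((u k : Fin n) : ℕ) ≤ m ↔ (k : ℕ) ≤ m := by
  refine Subgroup.closure_induction (k := adjSwap n '' ↑D)
    (p := fun g _ => ∀ k : Fin n, ((g k : Fin n) : ℕ) ≤ m ↔ (k : ℕ) ≤ m) ?_ ?_ ?_ ?_ hu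
  · rintro x ⟨i, hi, rfl⟩ k
    by_cases h : i + 1 < n
    · have him : i ≠ m := fun hh => hm (hh ▸ hi)
      simp only [adjSwap, dif_pos h, Equiv.swap_apply_def]
      split_ifs with h1 h2
      · subst h1; simp only [] ; constructor <;> intro hh <;> omega
      · subst h2; simp only [] ; constructor <;> intro hh <;> omega
      · rfl
    · simp [adjSwap, dif_neg h]
  · intro k; rfl
  · intro x y _ _ hx hy k
    simpa [Equiv.Perm.mul_apply] using (hx (y k)).trans (hy k)
  · intro x _ hx k
    have := hx (x⁻¹ k)
    simpa using this.symm

lemma conj_adjSwap {w : Equiv.Perm (Fin n)} {i : ℕ} (h : i + 1 < n)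
    (hadm : ((w ⟨i + 1, h⟩ : Fin n) : ℕ) = ((w ⟨i, Nat.lt_of_succ_lt h⟩ : Fin n) : ℕ) + 1) :
    w * adjSwap n i * w⁻¹ = adjSwap n ((w ⟨i, Nat.lt_of_succ_lt h⟩ : Fin n) : ℕ) := by
  have hlt : ((w ⟨i, Nat.lt_of_succ_lt h⟩ : Fin n) : ℕ) + 1 < n := by
    rw [← hadm]; exact (w ⟨i + 1, h⟩).isLt
  rw [adjSwap, dif_pos h, adjSwap, dif_pos hlt, ← Equiv.swap_apply_apply]
  congr 1
  · exact Fin.ext hadm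

lemma permImage_subset_range {D : Finset ℕ} (hD : D ⊆ Finset.range (n - 1))
    {w : Equiv.Perm (Fin n)} (hw : IsAdmissible n D w) :
    permImage n w D ⊆ Finset.range (n - 1) := by
  intro j hj
  simp only [permImage, Finset.mem_image] at hj
  obtain ⟨i, hi, rfl⟩ := hj
  have hi' : i + 1 < n := by have := hD hi; simp at this; omega
  have hlt : i < n := Nat.lt_of_succ_lt hi'
  rw [dif_pos hlt]
  have := hw i hi hi'
  have h2 := (w ⟨i + 1, hi'⟩).isLt
  simp only [Finset.mem_range]
  omega

lemma WD_map_conj {D : Finset ℕ} (hD : D ⊆ Finset.range (n - 1))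
    {w : Equiv.Perm (Fin n)} (hw : IsAdmissible n D w) :
    Subgroup.map (MulAut.conj w).toMonoidHom (WD n D) = WD n (permImage n w D) := by
  rw [WD, MonoidHom.map_closure, WD]
  congr 1
  rw [← Set.image_comp]
  rw [show (↑(permImage n w D) : Set ℕ)
      = (fun i => if h : i < n then ((w ⟨i, h⟩ : Fin n) : ℕ) else i) '' ↑D from by
    rw [permImage, Finset.coe_image]]
  rw [← Set.image_comp]
  apply Set.image_congr
  intro i hi
  have hi' : i + 1 < n := by have := hD hi; simp at this; omega
  have hlt : i < n := Nat.lt_of_succ_lt hi'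
  simp only [Function.comp_apply, dif_pos hlt]
  have := conj_adjSwap hi' (hw i hi hi')
  simpa [MulAut.conj] using this


lemma WDsum_conj {D : Finset ℕ} (hD : D ⊆ Finset.range (n - 1))
    {w : Equiv.Perm (Fin n)} (hw : IsAdmissible n D w) (v : Fin n → ℚ) :
    WDsum n (permImage n w D) (permAct n w v) = permAct n w (WDsum n D v) := by
  have finj : Function.Injective (MulAut.conj w).toMonoidHom := (MulAut.conj w).injective
  have hmap := WD_map_conj hD hw
  let E : ↥(WD n D) ≃* ↥(WD n (permImage n w D)) :=
    (Subgroup.equivMapOfInjective (WD n D) _ finj).trans (MulEquiv.subgroupCongr hmap)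
  rw [WDsum_eq_sum, WDsum_eq_sum, permAct_sum]
  refine (Fintype.sum_equiv E.toEquiv _ _ ?_).symm
  intro u
  have hcoe : (↑(E.toEquiv u) : Equiv.Perm (Fin n)) = w * ↑u * w⁻¹ := rfl
  rw [← permAct_mul, ← permAct_mul, hcoe]
  congr 1
  group

lemma card_WD_conj {D : Finset ℕ} (hD : D ⊆ Finset.range (n - 1))
    {w : Equiv.Perm (Fin n)} (hw : IsAdmissible n D w) :
    Nat.card ↥(WD n (permImage n w D)) = Nat.card ↥(WD n D) := by
  have finj : Function.Injective (MulAut.conj w).toMonoidHom := (MulAut.conj w).injective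
  rw [← WD_map_conj hD hw]
  exact (Nat.card_congr (Subgroup.equivMapOfInjective _ _ finj).toEquiv).symm

lemma avg_conj {D : Finset ℕ} (hD : D ⊆ Finset.range (n - 1))
    {w : Equiv.Perm (Fin n)} (hw : IsAdmissible n D w) (v : Fin n → ℚ) :
    avg n (permImage n w D) (permAct n w v) = permAct n w (avg n D v) := by
  rw [avg, avg, WDsum_conj hD hw, card_WD_conj hD hw, permAct_smul]

/-- The partial sum `c_j(v) = v 0 + ⋯ + v j`. -/
def pasum (n : ℕ) (j : ℕ) (v : Fin n → ℚ) : ℚ := ∑ k : Fin n, if (k : ℕ) ≤ j then v k else 0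

lemma pasum_sub (j : ℕ) (v v' : Fin n → ℚ) :
    pasum n j (v - v') = pasum n j v - pasum n j v' := by
  simp only [pasum, Pi.sub_apply, ← Finset.sum_sub_distrib]
  exact Finset.sum_congr rfl fun k _ => by split_ifs <;> simp

lemma pasum_zero (hn : 0 < n) (v : Fin n → ℚ) : pasum n 0 v = v ⟨0, hn⟩ := by
  rw [pasum]
  rw [show (fun k : Fin n => if (k : ℕ) ≤ 0 then v k else 0)
      = fun k : Fin n => if k = ⟨0, hn⟩ then v k else 0 from by
    funext k; congr 1; simp [Fin.ext_iff, Nat.le_zero]]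
  simp

lemma pasum_succ {j : ℕ} (h : j + 1 < n) (v : Fin n → ℚ) :
    pasum n (j + 1) v = pasum n j v + v ⟨j + 1, h⟩ := by
  have : pasum n (j+1) v - pasum n j v = v ⟨j+1, h⟩ := by
    rw [pasum, pasum, ← Finset.sum_sub_distrib]
    rw [show (fun k : Fin n => (if (k : ℕ) ≤ j + 1 then v k else 0)
        - (if (k : ℕ) ≤ j then v k else 0))
        = fun k : Fin n => if k = ⟨j+1, h⟩ then v k else 0 from by
      funext k
      rcases lt_trichotomy (k : ℕ) (j+1) with hk | hk | hk
      · rw [if_pos (by omega), if_pos (by omega), if_neg (by simp [Fin.ext_iff]; omega)]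
        ring
      · rw [if_pos (by omega), if_neg (by omega), if_pos (by simp [Fin.ext_iff]; omega)]
        ring
      · rw [if_neg (by omega), if_neg (by omega), if_neg (by simp [Fin.ext_iff]; omega)]
        ring]
    simp
  linarith

lemma pasum_ge {j : ℕ} (h : n ≤ j + 1) (v : Fin n → ℚ) : pasum n j v = ∑ k, v k := by
  rw [pasum]
  exact Finset.sum_congr rfl fun k _ => if_pos (by omega)

lemma decomposition (hn : 0 < n) (v : Fin n → ℚ) (hv : ∑ k, v k = 0) :
    v = ∑ i ∈ Finset.range (n - 1), pasum n i v • simpleRoot n i := by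
  funext k
  rw [Finset.sum_apply]
  simp only [Pi.smul_apply, simpleRoot, Pi.sub_apply, stde, smul_eq_mul, mul_sub]
  rw [Finset.sum_sub_distrib]
  have h1 : ∑ i ∈ Finset.range (n-1), pasum n i v * (if (k : ℕ) = i then 1 else 0)
      = if (k : ℕ) ∈ Finset.range (n-1) then pasum n (k : ℕ) v else 0 := by
    rw [← Finset.sum_ite_eq (Finset.range (n-1)) (k : ℕ) (fun i => pasum n i v)]
    exact Finset.sum_congr rfl fun i _ => by rcases eq_or_ne (k : ℕ) i with h | h <;>
      simp [h, eq_comm, Ne.symm]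
  have h2 : ∑ i ∈ Finset.range (n-1), pasum n i v * (if (k : ℕ) = i + 1 then 1 else 0)
      = if 1 ≤ (k : ℕ) then pasum n ((k : ℕ) - 1) v else 0 := by
    rcases Nat.eq_zero_or_pos (k : ℕ) with hk | hk
    · rw [if_neg (by omega)]
      refine Finset.sum_eq_zero fun i _ => by rw [if_neg (by omega), mul_zero]
    · rw [if_pos (show 1 ≤ (k:ℕ) by omega)]
      have hk1 : (k : ℕ) - 1 ∈ Finset.range (n - 1) := by
        have := k.isLt; simp only [Finset.mem_range]; omega
      rw [show pasum n ((k:ℕ)-1) v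
          = if ((k:ℕ)-1) ∈ Finset.range (n-1) then pasum n ((k:ℕ)-1) v else 0 from
        (if_pos hk1).symm]
      rw [← Finset.sum_ite_eq (Finset.range (n-1)) ((k : ℕ) - 1) (fun i => pasum n i v)]
      exact Finset.sum_congr rfl fun i _ => by
        rcases eq_or_ne ((k : ℕ) - 1) i with h | h
        · rw [if_pos h, if_pos (by omega), mul_one]
        · rw [if_neg h, if_neg (by omega), mul_zero]
  rw [h1, h2]
  have hlt := k.isLt
  by_cases hk0 : (k : ℕ) = 0
  · rcases Nat.lt_or_ge (k : ℕ) (n-1) with h | h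
    · rw [if_pos (by simpa using h), if_neg (by omega), hk0, pasum_zero hn, sub_zero]
      congr 1; exact Fin.ext hk0
    · -- k = 0 and k ≥ n-1 means n = 1
      have hn1 : n = 1 := by omega
      rw [if_neg (by simp; omega), if_neg (by omega)]
      subst hn1
      have : v k = ∑ m, v m := by
        rw [show (Finset.univ : Finset (Fin 1)) = {k} from Finset.eq_singleton_iff_unique_mem.mpr
          ⟨Finset.mem_univ _, fun x _ => Subsingleton.elim x k⟩, Finset.sum_singleton]
      rw [this, hv]; norm_num
  · have hk1 : 1 ≤ (k : ℕ) := by omega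
    rcases Nat.lt_or_ge (k : ℕ) (n-1) with h | h
    · rw [if_pos (by simpa using h), if_pos hk1]
      have hs : (k : ℕ) - 1 + 1 = (k : ℕ) := by omega
      have := pasum_succ (j := (k : ℕ) - 1) (by omega) v
      rw [show (⟨(k:ℕ)-1+1, by omega⟩ : Fin n) = k from Fin.ext (by simp; omega)] at this
      rw [show pasum n (k : ℕ) v = pasum n ((k:ℕ)-1+1) v from by rw [hs]]
      rw [this]; ring
    · -- k = n-1 ≥ 1
      have hkn : (k : ℕ) = n - 1 := by omega
      rw [if_neg (by simp; omega), if_pos hk1]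
      have := pasum_succ (j := (k : ℕ) - 1) (by omega) v
      rw [show (⟨(k:ℕ)-1+1, by omega⟩ : Fin n) = k from Fin.ext (by simp; omega)] at this
      have hge : pasum n ((k:ℕ)-1+1) v = ∑ m, v m := pasum_ge (by omega) v
      rw [hge, hv] at this
      linarith

lemma pasum_permAct {D : Finset ℕ} {j : ℕ} (hj : j ∉ D) {u : Equiv.Perm (Fin n)}
    (hu : u ∈ WD n D) (v : Fin n → ℚ) : pasum n j (permAct n u v) = pasum n j v := by
  rw [pasum, pasum]
  simp only [permAct]
  rw [← Equiv.sum_comp u (fun k : Fin n => if (k : ℕ) ≤ j then v (u⁻¹ k) else 0)]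
  refine Finset.sum_congr rfl fun m _ => ?_
  have := WD_le_iff D hj hu m
  simp only [Equiv.Perm.inv_def, Equiv.symm_apply_apply]
  congr 1
  simp only [eq_iff_iff]
  exact this

lemma dominant_of_adjacent {v : Fin n → ℚ}
    (hv : ∀ m (h : m + 1 < n), v ⟨m + 1, h⟩ ≤ v ⟨m, Nat.lt_of_succ_lt h⟩) :
    Dominant n v := by
  intro i j hij
  obtain ⟨a, ha⟩ := i
  obtain ⟨b, hb⟩ := j
  have hab : a ≤ b := hij
  clear hij
  have key : ∀ b, a ≤ b → ∀ hb : b < n, v ⟨b, hb⟩ ≤ v ⟨a, ha⟩ := by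
    intro b
    induction b with
    | zero => intro hab hb; exact le_of_eq (congrArg v (Fin.ext (by simp; omega)))
    | succ m ih =>
      intro hab hb
      rcases Nat.lt_or_ge a (m + 1) with hlt | hge
      · exact le_trans (hv m hb) (ih (by omega) (Nat.lt_of_succ_lt hb))
      · exact le_of_eq (congrArg v (Fin.ext (by simp; omega)))
  exact key b hab hb


lemma theta_dom (f : ℕ) : Dominant n ((f : ℚ) • theta n) := by
  intro i j hij
  simp only [Pi.smul_apply, theta, smul_eq_mul]
  have h1 : ((i : ℕ) : ℚ) ≤ ((j : ℕ) : ℚ) := by exact_mod_cast (Fin.le_def.mp hij)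
  have h2 : (0 : ℚ) ≤ f := by positivity
  nlinarith

lemma avg_dominant {D : Finset ℕ} {v : Fin n → ℚ} (hv : Dominant n v) :
    Dominant n (avg n D v) := by
  apply dominant_of_adjacent
  intro m h
  by_cases hm : m ∈ D
  · have hinv := congrFun (permAct_avg D (adjSwap_mem hm) v) ⟨m + 1, h⟩
    rw [permAct] at hinv
    have hsw : (adjSwap n m)⁻¹ (⟨m + 1, h⟩ : Fin n) = ⟨m, Nat.lt_of_succ_lt h⟩ := by
      rw [adjSwap, dif_pos h, Equiv.swap_inv, Equiv.swap_apply_right]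
    rw [hsw] at hinv
    exact le_of_eq hinv.symm
  · rw [avg]
    simp only [Pi.smul_apply, smul_eq_mul]
    have hle : WDsum n D v ⟨m + 1, h⟩ ≤ WDsum n D v ⟨m, Nat.lt_of_succ_lt h⟩ := by
      rw [WDsum_eq_sum]
      rw [Finset.sum_apply, Finset.sum_apply]
      refine Finset.sum_le_sum fun u _ => ?_
      have hu : (↑u : Equiv.Perm (Fin n))⁻¹ ∈ WD n D := (WD n D).inv_mem u.prop
      have h1 : (((↑u : Equiv.Perm (Fin n))⁻¹ (⟨m, Nat.lt_of_succ_lt h⟩ : Fin n) : Fin n) : ℕ) ≤ m :=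
        (WD_le_iff D hm hu _).mpr (le_refl m)
      have h2 : ¬ (((↑u : Equiv.Perm (Fin n))⁻¹ (⟨m + 1, h⟩ : Fin n) : Fin n) : ℕ) ≤ m := by
        intro hc
        have := (WD_le_iff D hm hu _).mp hc
        simp at this
      simp only [permAct]
      exact hv _ _ (by rw [Fin.le_def]; omega)
    have hpos : (0 : ℚ) ≤ ((Nat.card ↥(WD n D) : ℚ))⁻¹ := by positivity
    exact mul_le_mul_of_nonneg_left hle hpos

lemma sum_stde {i : ℕ} (hi : i < n) : ∑ k, stde n i k = 1 := by
  rw [show (fun k : Fin n => stde n i k) = fun k : Fin n => if k = ⟨i, hi⟩ then 1 else 0 from by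
    funext k; rw [stde]; congr 1; simp [Fin.ext_iff]]
  simp

lemma sum_simpleRoot {i : ℕ} (h : i + 1 < n) : ∑ k, simpleRoot n i k = 0 := by
  simp only [simpleRoot, Pi.sub_apply, Finset.sum_sub_distrib]
  rw [sum_stde (Nat.lt_of_succ_lt h), sum_stde h, sub_self]

lemma sum_rootLE {v v' : Fin n → ℚ} (h : rootLE n v v') : ∑ k, v' k = ∑ k, v k := by
  obtain ⟨c, _, heq⟩ := h
  have h2 : ∑ k, (v' - v) k = 0 := by
    rw [show v' - v = ∑ i ∈ Finset.range (n - 1), c i • simpleRoot n i from heq]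
    simp only [Finset.sum_apply, Pi.smul_apply, smul_eq_mul]
    rw [Finset.sum_comm]
    refine Finset.sum_eq_zero fun i hi => ?_
    rw [← Finset.mul_sum, sum_simpleRoot (by simp only [Finset.mem_range] at hi; omega), mul_zero]
  have h3 : ∑ k, (v' - v) k = ∑ k, v' k - ∑ k, v k := by
    simp [Finset.sum_sub_distrib]
  linarith

lemma sum_avg (D : Finset ℕ) (v : Fin n → ℚ) : ∑ k, avg n D v k = ∑ k, v k := by
  have h1 : ∑ k, WDsum n D v k = (Nat.card ↥(WD n D) : ℚ) * ∑ k, v k := by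
    rw [WDsum_eq_sum]
    simp only [Finset.sum_apply]
    rw [Finset.sum_comm]
    calc ∑ u : ↥(WD n D), ∑ k, permAct n (↑u) v k
        = ∑ _u : ↥(WD n D), ∑ k, v k := Finset.sum_congr rfl fun u _ => sum_permAct _ v
      _ = (Nat.card ↥(WD n D) : ℚ) * ∑ k, v k := by
          simp [Finset.sum_const, Finset.card_univ, Nat.card_eq_fintype_card, nsmul_eq_mul]
  simp only [avg, Pi.smul_apply, smul_eq_mul, ← Finset.mul_sum]
  rw [h1, ← mul_assoc, inv_mul_cancel₀ (card_WD_pos D).ne', one_mul]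


lemma WDsum_finsum {ι : Type*} (D : Finset ℕ) (s : Finset ι) (F : ι → Fin n → ℚ) :
    WDsum n D (∑ i ∈ s, F i) = ∑ i ∈ s, WDsum n D (F i) := by
  simp only [WDsum_eq_sum, permAct_sum]
  rw [Finset.sum_comm]

lemma pasum_smul (j : ℕ) (c : ℚ) (v : Fin n → ℚ) : pasum n j (c • v) = c * pasum n j v := by
  simp only [pasum, Pi.smul_apply, smul_eq_mul, Finset.mul_sum]
  exact Finset.sum_congr rfl fun k _ => by split_ifs <;> simp

lemma mem_suppOf {j : ℕ} {v : Fin n → ℚ} :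
    j ∈ suppOf n v ↔ j ∈ Finset.range (n - 1) ∧ pasum n j v ≠ 0 := by
  rw [suppOf, Finset.mem_filter]
  rfl

lemma pasum_avg {D : Finset ℕ} {j : ℕ} (hj : j ∉ D) (v : Fin n → ℚ) :
    pasum n j (avg n D v) = pasum n j v := by
  have h1 : pasum n j (WDsum n D v) = (Nat.card ↥(WD n D) : ℚ) * pasum n j v := by
    rw [WDsum_eq_sum, pasum]
    simp only [Finset.sum_apply]
    rw [show (∑ k : Fin n, if (k : ℕ) ≤ j then ∑ u : ↥(WD n D), permAct n (↑u) v k else 0)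
        = ∑ k : Fin n, ∑ u : ↥(WD n D), (if (k : ℕ) ≤ j then permAct n (↑u) v k else 0) from
      Finset.sum_congr rfl fun k _ => by split_ifs <;> simp]
    rw [Finset.sum_comm]
    calc ∑ u : ↥(WD n D), ∑ k : Fin n, (if (k : ℕ) ≤ j then permAct n (↑u) v k else 0)
        = ∑ _u : ↥(WD n D), pasum n j v :=
          Finset.sum_congr rfl fun u _ => pasum_permAct hj u.prop v
      _ = (Nat.card ↥(WD n D) : ℚ) * pasum n j v := by
          simp [Finset.sum_const, Finset.card_univ, Nat.card_eq_fintype_card, nsmul_eq_mul]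
  rw [avg, pasum_smul, h1, ← mul_assoc, inv_mul_cancel₀ (card_WD_pos D).ne', one_mul]

lemma permAct_inv_cancel (w : Equiv.Perm (Fin n)) (v : Fin n → ℚ) :
    permAct n w⁻¹ (permAct n w v) = v := by
  rw [← permAct_mul, inv_mul_cancel, permAct_one]

/-- (a) → (b), and the `moreover` part. -/
lemma main_forward (hn : 0 < n) (f : ℕ) {D : Finset ℕ} (hD : D ⊆ Finset.range (n - 1))
    (v : Fin n → ℚ) (hsum : ∑ k, v k = ∑ k, ((f : ℚ) • theta n) k)
    {w : Equiv.Perm (Fin n)} (hw : IsAdmissible n D w)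
    (hsupp : suppOf n ((f : ℚ) • theta n - permAct n w (avg n D v)) ⊆ permImage n w D) :
    avg n D v = avg n D ((f : ℚ) • permAct n w⁻¹ (theta n)) := by
  set t : Fin n → ℚ := (f : ℚ) • theta n with ht
  set ν : Fin n → ℚ := avg n D v with hν
  set μ : Fin n → ℚ := permAct n w ν with hμ
  set D' : Finset ℕ := permImage n w D with hD'
  have hsum0 : ∑ k, (t - μ) k = 0 := by
    have h1 : ∑ k, μ k = ∑ k, v k := by rw [hμ, sum_permAct, hν, sum_avg]
    simp only [Pi.sub_apply, Finset.sum_sub_distrib]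
    rw [h1, hsum, sub_self]
  have hdec : t - μ = ∑ i ∈ Finset.range (n - 1), pasum n i (t - μ) • simpleRoot n i :=
    decomposition hn _ hsum0
  have hWzero : WDsum n D' (t - μ) = 0 := by
    rw [hdec, WDsum_finsum]
    refine Finset.sum_eq_zero fun i hi => ?_
    rcases eq_or_ne (pasum n i (t - μ)) 0 with hz | hz
    · rw [WDsum_smul, hz, zero_smul]
    · have hiD' : i ∈ D' := hsupp (mem_suppOf.mpr ⟨hi, hz⟩)
      have hilt : i + 1 < n := by simp only [Finset.mem_range] at hi; omega
      rw [WDsum_smul, WDsum_simpleRoot D' hiD' hilt, smul_zero]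
  have havg0 : avg n D' t - avg n D' μ = 0 := by
    rw [← avg_sub, avg, hWzero, smul_zero]
  have hμinv : avg n D' μ = μ := by
    apply avg_of_invariant
    intro u hu
    rw [hD', ← WD_map_conj hD hw] at hu
    obtain ⟨u₀, hu₀, rfl⟩ := hu
    have hcoe : (MulAut.conj w).toMonoidHom u₀ = w * u₀ * w⁻¹ := rfl
    rw [hcoe, hμ, ← permAct_mul]
    have : w * u₀ * w⁻¹ * w = w * u₀ := by group
    rw [this, permAct_mul, permAct_avg D hu₀]
  have hμt : μ = avg n D' t := by
    have h := havg0
    rw [hμinv, sub_eq_zero] at h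
    exact h.symm
  have hconj : avg n D' t = permAct n w (avg n D ((f : ℚ) • permAct n w⁻¹ (theta n))) := by
    have h1 : permAct n w ((f : ℚ) • permAct n w⁻¹ (theta n)) = t := by
      rw [permAct_smul, ← permAct_mul, mul_inv_cancel, permAct_one, ht]
    rw [← h1, avg_conj hD hw]
  have : μ = permAct n w (avg n D ((f : ℚ) • permAct n w⁻¹ (theta n))) := hμt.trans hconj
  have := congrArg (permAct n w⁻¹) this
  rwa [hμ, permAct_inv_cancel, permAct_inv_cancel] at this

/-- (b) → (a). -/
lemma main_backward (hn : 0 < n) (f : ℕ) {D : Finset ℕ} (hD : D ⊆ Finset.range (n - 1))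
    (v : Fin n → ℚ) {σ : Equiv.Perm (Fin n)} (hσ : IsAdmissible n D σ)
    (heq : avg n D v = avg n D ((f : ℚ) • permAct n σ⁻¹ (theta n))) :
    Dominant n (permAct n σ (avg n D v)) ∧
    suppOf n ((f : ℚ) • theta n - permAct n σ (avg n D v)) ⊆ permImage n σ D := by
  set t : Fin n → ℚ := (f : ℚ) • theta n with ht
  set D' : Finset ℕ := permImage n σ D with hD'
  have hμ : permAct n σ (avg n D v) = avg n D' t := by
    rw [heq, ← avg_conj hD hσ]
    congr 1
    rw [permAct_smul, ← permAct_mul, mul_inv_cancel, permAct_one]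
  constructor
  · rw [hμ]
    exact avg_dominant (theta_dom f)
  · intro j hj
    rw [mem_suppOf] at hj
    by_contra hjD'
    have h0 : pasum n j (t - permAct n σ (avg n D v)) = 0 := by
      rw [pasum_sub, hμ, pasum_avg hjD', sub_self]
    exact hj.2 h0


/-- Proposition `minimal`, §2.2, for `G = GL_n`.  The following are
equivalent: (a) there is a `D`-admissible `w` with `w·λ'_D` dominant and
`supp (fθ − w·λ'_D) ⊆ w(D)`; (b) there is a `D`-admissible `σ` with
`λ'_D = (f·(σ⁻¹·θ))'_D`.  Moreover if (a) holds for `w` then (b) holds with `σ = w`. -/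
theorem statement7 (n f : ℕ) (hn : 2 ≤ n) (hf : 1 ≤ f) (D : Finset ℕ)
    (hD : D ⊆ Finset.range (n - 1)) (lam : Fin n → ℤ) (hlam : SatisfiesHf n f lam) :
    ((∃ w : Equiv.Perm (Fin n), IsAdmissible n D w ∧
        Dominant n (permAct n w (avg n D (ratVec n lam))) ∧
        suppOf n ((f : ℚ) • theta n - permAct n w (avg n D (ratVec n lam)))
          ⊆ permImage n w D)
      ↔ (∃ σ : Equiv.Perm (Fin n), IsAdmissible n D σ ∧
          avg n D (ratVec n lam) = avg n D ((f : ℚ) • permAct n σ⁻¹ (theta n)))) ∧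
    (∀ w : Equiv.Perm (Fin n), IsAdmissible n D w →
      Dominant n (permAct n w (avg n D (ratVec n lam))) →
      suppOf n ((f : ℚ) • theta n - permAct n w (avg n D (ratVec n lam))) ⊆ permImage n w D →
      avg n D (ratVec n lam) = avg n D ((f : ℚ) • permAct n w⁻¹ (theta n))) := by
  have hn0 : 0 < n := by omega
  have hsum : ∑ k, ratVec n lam k = ∑ k, ((f : ℚ) • theta n) k := by
    have h := sum_rootLE (hlam 1)
    rw [permAct_one] at h
    exact h.symm
  constructor
  · constructor
    · rintro ⟨w, hw, _, hsupp⟩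
      exact ⟨w, hw, main_forward hn0 f hD _ hsum hw hsupp⟩
    · rintro ⟨σ, hσ, heq⟩
      obtain ⟨hdom, hsupp⟩ := main_backward hn0 f hD _ hσ heq
      exact ⟨σ, hσ, hdom, hsupp⟩
  · intro w hw _ hsupp
    exact main_forward hn0 f hD _ hsum hw hsupp

end BHHMS
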